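/- For continuous maps f, g : W → X and h : X → Y, D(h ∘ f, h ∘ g) ≤ D(f, g); moreover if h is a homotopy equivalence then D(h ∘ f, h ∘ g) = D(f, g). -/

import Mathlib

/-- Homotopic distance: least `n` such that `X` has an open cover by `n+1` open sets on each
of which `f` and `g` restrict to homotopic maps; `⊤` if no such cover exists. -/
noncomputable def hDist {X Y : Type*} [TopologicalSpace X] [TopologicalSpace Y]
    (f g : C(X, Y)) : ℕ∞ :=
  sInf {N : ℕ∞ | ∃ n : ℕ, N = n ∧ ∃ U : Fin (n + 1) → Set X,
    (∀ i, IsOpen (U i)) ∧ (∀ x, ∃ i, x ∈ U i) ∧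
    ∀ i, (f.restrict (U i)).Homotopic (g.restrict (U i))}

lemma restrict_comp_eq {W X Y : Type*} [TopologicalSpace W] [TopologicalSpace X]
    [TopologicalSpace Y] (f : C(W, X)) (h : C(X, Y)) (U : Set W) :
    (h.comp f).restrict U = h.comp (f.restrict U) := rfl

lemma hDist_comp_le {W X Y : Type*} [TopologicalSpace W] [TopologicalSpace X]
    [TopologicalSpace Y] (f g : C(W, X)) (h : C(X, Y)) :
    hDist (h.comp f) (h.comp g) ≤ hDist f g := by
  apply sInf_le_sInf
  rintro N ⟨n, rfl, U, hopen, hcov, hhom⟩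
  exact ⟨n, rfl, U, hopen, hcov, fun i =>
    (ContinuousMap.Homotopic.comp (ContinuousMap.Homotopic.refl h) (hhom i))⟩

theorem hDist_comp_left {W X Y : Type*} [TopologicalSpace W] [TopologicalSpace X]
    [TopologicalSpace Y] (f g : C(W, X)) (h : C(X, Y)) :
    hDist (h.comp f) (h.comp g) ≤ hDist f g ∧
      ((∃ k : C(Y, X), (h.comp k).Homotopic (ContinuousMap.id Y) ∧
          (k.comp h).Homotopic (ContinuousMap.id X)) →
        hDist (h.comp f) (h.comp g) = hDist f g) := by
  refine ⟨hDist_comp_le f g h, ?_⟩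
  rintro ⟨k, _, hkh⟩
  refine le_antisymm (hDist_comp_le f g h) ?_
  apply sInf_le_sInf
  rintro N ⟨n, rfl, U, hopen, hcov, hhom⟩
  refine ⟨n, rfl, U, hopen, hcov, fun i => ?_⟩
  have key : ∀ p : C(W, X), (((k.comp h).comp p).restrict (U i)).Homotopic
      (p.restrict (U i)) := fun p => by
    have := ContinuousMap.Homotopic.comp hkh (ContinuousMap.Homotopic.refl (p.restrict (U i)))
    simpa [restrict_comp_eq, ContinuousMap.comp_assoc] using this
  have mid : (((k.comp h).comp f).restrict (U i)).Homotopic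
      (((k.comp h).comp g).restrict (U i)) := by
    rw [ContinuousMap.comp_assoc, ContinuousMap.comp_assoc,
      restrict_comp_eq, restrict_comp_eq]
    exact ContinuousMap.Homotopic.comp (ContinuousMap.Homotopic.refl k) (hhom i)
  exact ((key f).symm.trans mid).trans (key g)
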